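/- For every integer n ≥ 1 and every real δ > 0, there exist a regular value distribution represented by G as in the context (i.e., the revenue curve q ↦ q·invG(1−q) is concave on (0,1]) and a vector p⃗ = (p_1,…,p_n) of nonnegative prices such that for every anonymous price p ≥ 0: R^d_n(p⃗) ≥ (1/(1−(1−1/n)^n) − δ)·p(1−G(p)^n). Hence for regular distributions the gap between optimal discriminatory and optimal anonymous revenue can be arbitrarily close to 1/(1−(1−1/n)^n). -/

import Mathlib

open Finset

lemma lem_J (b : ℝ) : ∀ N : ℕ, (1-b)^2 * ∑ k ∈ range N, (k:ℝ)*b^k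
    = b - (N:ℝ)*b^N + ((N:ℝ)-1)*b^(N+1) := by
  intro N
  induction N with
  | zero => simp
  | succ N ih =>
    rw [sum_range_succ, mul_add]
    push_cast
    rw [ih]
    ring

lemma lem_srec (x b : ℝ) (k : ℕ) :
    (∑ i ∈ range (k+1), x^i * b^(k+1-1-i)) = x^k + b * ∑ i ∈ range k, x^i * b^(k-1-i) := by
  rw [sum_range_succ]
  simp only [Nat.add_sub_cancel, Nat.sub_self, pow_zero, mul_one]
  rw [mul_sum, add_comm]
  congr 1
  apply sum_congr rfl
  intro i hi
  rw [mem_range] at hi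
  rw [show k - i = (k-1-i)+1 from by omega, pow_succ]
  ring

lemma lem_bs_le (b x : ℝ) (hb : 0 ≤ b) (hbx : b ≤ x) (k : ℕ) :
    b * (∑ i ∈ range k, x^i * b^(k-1-i)) ≤ (k:ℝ) * x^k := by
  have hx : 0 ≤ x := le_trans hb hbx
  rw [mul_sum]
  calc ∑ i ∈ range k, b * (x^i * b^(k-1-i)) ≤ ∑ i ∈ range k, x^k := by
        apply sum_le_sum
        intro i hi
        rw [mem_range] at hi
        have h1 : b * (x^i * b^(k-1-i)) = x^i * b^(k-i) := by
          rw [show k - i = (k-1-i)+1 from by omega, pow_succ]; ring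
        rw [h1]
        calc x^i * b^(k-i) ≤ x^i * x^(k-i) :=
              mul_le_mul_of_nonneg_left (pow_le_pow_left₀ hb hbx _) (pow_nonneg hx i)
          _ = x^k := by rw [← pow_add]; congr 1; omega
    _ = (k:ℝ) * x^k := by rw [sum_const, card_range, nsmul_eq_mul]

lemma lem_bs_ge (b x : ℝ) (hx : 0 ≤ x) (hbx : x ≤ b) (k : ℕ) :
    (k:ℝ) * x^k ≤ b * (∑ i ∈ range k, x^i * b^(k-1-i)) := by
  rw [mul_sum]
  calc (k:ℝ) * x^k = ∑ _i ∈ range k, x^k := by rw [sum_const, card_range, nsmul_eq_mul]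
    _ ≤ ∑ i ∈ range k, b * (x^i * b^(k-1-i)) := by
        apply sum_le_sum
        intro i hi
        rw [mem_range] at hi
        have h1 : b * (x^i * b^(k-1-i)) = x^i * b^(k-i) := by
          rw [show k - i = (k-1-i)+1 from by omega, pow_succ]; ring
        rw [h1]
        calc x^k = x^i * x^(k-i) := by rw [← pow_add]; congr 1; omega
          _ ≤ x^i * b^(k-i) :=
              mul_le_mul_of_nonneg_left (pow_le_pow_left₀ hx hbx _) (pow_nonneg hx i)

lemma lem_chain (b x : ℝ) (hb : 0 ≤ b) (hbx : b ≤ x) (k : ℕ) :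
    ∀ M, k ≤ M → (M:ℝ)*b^M * (∑ i ∈ range k, x^i * b^(k-1-i))
      ≤ (k:ℝ)*b^k * (∑ i ∈ range M, x^i * b^(M-1-i)) := by
  have hx : 0 ≤ x := le_trans hb hbx
  intro M hM
  induction M, hM using Nat.le_induction with
  | base => exact le_refl _
  | succ M hM ih =>
    rw [lem_srec]
    have hsk : 0 ≤ ∑ i ∈ range k, x^i * b^(k-1-i) := by
      apply sum_nonneg; intro i _; positivity
    have hsM : 0 ≤ ∑ i ∈ range M, x^i * b^(M-1-i) := by
      apply sum_nonneg; intro i _; positivity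
    have h1 : (M:ℝ)*b^(M+1) * (∑ i ∈ range k, x^i * b^(k-1-i))
        ≤ (k:ℝ)*b^k * (b * ∑ i ∈ range M, x^i * b^(M-1-i)) := by
      have h := mul_le_mul_of_nonneg_left ih hb
      calc (M:ℝ)*b^(M+1) * (∑ i ∈ range k, x^i * b^(k-1-i))
          = b * ((M:ℝ)*b^M * ∑ i ∈ range k, x^i * b^(k-1-i)) := by ring
        _ ≤ b * ((k:ℝ)*b^k * ∑ i ∈ range M, x^i * b^(M-1-i)) := h
        _ = (k:ℝ)*b^k * (b * ∑ i ∈ range M, x^i * b^(M-1-i)) := by ring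
    have h2 : b^(M+1) * (∑ i ∈ range k, x^i * b^(k-1-i)) ≤ (k:ℝ)*b^k * x^M := by
      obtain ⟨d, rfl⟩ : ∃ d, M = k + d := ⟨M - k, by omega⟩
      have hbs := lem_bs_le b x hb hbx k
      have hpow : b^d ≤ x^d := pow_le_pow_left₀ hb hbx d
      have e1 : b^(k+d+1) * (∑ i ∈ range k, x^i * b^(k-1-i))
          = b^k * b^d * (b * ∑ i ∈ range k, x^i * b^(k-1-i)) := by ring
      rw [e1]
      calc b^k * b^d * (b * ∑ i ∈ range k, x^i * b^(k-1-i))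
          ≤ b^k * b^d * ((k:ℝ) * x^k) := by
            apply mul_le_mul_of_nonneg_left hbs; positivity
        _ ≤ (k:ℝ)*b^k * x^(k+d) := by
            rw [pow_add]
            have : b^k * b^d * ((k:ℝ) * x^k) = (k:ℝ) * b^k * (b^d * x^k) := by ring
            rw [this]
            have : (k:ℝ)*b^k * (x^k*x^d) = (k:ℝ) * b^k * (x^d * x^k) := by ring
            rw [this]
            apply mul_le_mul_of_nonneg_left _ (by positivity)
            apply mul_le_mul_of_nonneg_right hpow (pow_nonneg hx k)
    push_cast
    calc ((M:ℝ)+1)*b^(M+1) * (∑ i ∈ range k, x^i * b^(k-1-i))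
        = (M:ℝ)*b^(M+1) * (∑ i ∈ range k, x^i * b^(k-1-i))
          + b^(M+1) * (∑ i ∈ range k, x^i * b^(k-1-i)) := by ring
      _ ≤ (k:ℝ)*b^k * (b * ∑ i ∈ range M, x^i * b^(M-1-i)) + (k:ℝ)*b^k * x^M :=
          add_le_add h1 h2
      _ = (k:ℝ)*b^k * (x^M + b * ∑ i ∈ range M, x^i * b^(M-1-i)) := by ring

lemma lem_chain' (b x : ℝ) (hx : 0 ≤ x) (hbx : x ≤ b) (k : ℕ) :
    ∀ M, k ≤ M → (k:ℝ)*b^k * (∑ i ∈ range M, x^i * b^(M-1-i))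
      ≤ (M:ℝ)*b^M * (∑ i ∈ range k, x^i * b^(k-1-i)) := by
  have hb : 0 ≤ b := le_trans hx hbx
  intro M hM
  induction M, hM using Nat.le_induction with
  | base => exact le_refl _
  | succ M hM ih =>
    rw [lem_srec]
    have hsk : 0 ≤ ∑ i ∈ range k, x^i * b^(k-1-i) := by
      apply sum_nonneg; intro i _; positivity
    have h1 : (k:ℝ)*b^k * (b * ∑ i ∈ range M, x^i * b^(M-1-i))
        ≤ (M:ℝ)*b^(M+1) * (∑ i ∈ range k, x^i * b^(k-1-i)) := by
      have h := mul_le_mul_of_nonneg_left ih hb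
      calc (k:ℝ)*b^k * (b * ∑ i ∈ range M, x^i * b^(M-1-i))
          = b * ((k:ℝ)*b^k * ∑ i ∈ range M, x^i * b^(M-1-i)) := by ring
        _ ≤ b * ((M:ℝ)*b^M * ∑ i ∈ range k, x^i * b^(k-1-i)) := h
        _ = (M:ℝ)*b^(M+1) * (∑ i ∈ range k, x^i * b^(k-1-i)) := by ring
    have h2 : (k:ℝ)*b^k * x^M ≤ b^(M+1) * (∑ i ∈ range k, x^i * b^(k-1-i)) := by
      obtain ⟨d, rfl⟩ : ∃ d, M = k + d := ⟨M - k, by omega⟩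
      have hbs := lem_bs_ge b x hx hbx k
      have hpow : x^d ≤ b^d := pow_le_pow_left₀ hx hbx d
      have e1 : b^(k+d+1) * (∑ i ∈ range k, x^i * b^(k-1-i))
          = b^k * b^d * (b * ∑ i ∈ range k, x^i * b^(k-1-i)) := by ring
      rw [e1]
      calc (k:ℝ)*b^k * x^(k+d) = b^k * x^d * ((k:ℝ) * x^k) := by rw [pow_add]; ring
        _ ≤ b^k * b^d * ((k:ℝ) * x^k) := by
            apply mul_le_mul_of_nonneg_right _ (by positivity)
            apply mul_le_mul_of_nonneg_left hpow (pow_nonneg hb k)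
        _ ≤ b^k * b^d * (b * ∑ i ∈ range k, x^i * b^(k-1-i)) := by
            apply mul_le_mul_of_nonneg_left hbs; positivity
    push_cast
    calc (k:ℝ)*b^k * (x^M + b * ∑ i ∈ range M, x^i * b^(M-1-i))
        = (k:ℝ)*b^k * x^M + (k:ℝ)*b^k * (b * ∑ i ∈ range M, x^i * b^(M-1-i)) := by ring
      _ ≤ b^(M+1) * (∑ i ∈ range k, x^i * b^(k-1-i))
          + (M:ℝ)*b^(M+1) * (∑ i ∈ range k, x^i * b^(k-1-i)) := add_le_add h2 h1
      _ = ((M:ℝ)+1)*b^(M+1) * (∑ i ∈ range k, x^i * b^(k-1-i)) := by ring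


set_option maxHeartbeats 2000000 in
/-- Theorem 6 (lower bound for regular distributions): for every `n ≥ 1` and `δ > 0`
there is a regular value distribution `G` and discriminatory prices whose revenue is at
least `(1/(1 - (1 - 1/n)^n) - δ)` times the revenue of every anonymous price. -/
theorem stmt_13 (n : ℕ) (hn : 1 ≤ n) (δ : ℝ) (hδ : 0 < δ) :
    ∃ G : ℝ → ℝ, ∃ pv : Fin n → ℝ,
      Monotone G ∧
      (∀ x : ℝ, Filter.Tendsto G (nhdsWithin x (Set.Iio x)) (nhds (G x))) ∧
      (∀ p : ℝ, 0 ≤ G p) ∧ (∀ p : ℝ, G p ≤ 1) ∧ (∀ p : ℝ, p ≤ 0 → G p = 0) ∧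
      (∀ t : ℝ, 0 ≤ t → t < 1 → BddAbove {p : ℝ | 0 ≤ p ∧ G p ≤ t}) ∧
      ConcaveOn ℝ (Set.Ioc (0 : ℝ) 1)
        (fun u : ℝ => u * sSup {p : ℝ | 0 ≤ p ∧ G p ≤ 1 - u}) ∧
      (∀ i, 0 ≤ pv i) ∧
      (∀ p : ℝ, 0 ≤ p →
        (1 / (1 - (1 - 1 / (n : ℝ)) ^ n) - δ) * (p * (1 - (G p) ^ n)) ≤
          ∑ i, pv i * (1 - G (pv i)) * ∏ j ∈ Finset.Iio i, G (pv j)) := by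
  obtain ⟨m, rfl⟩ : ∃ m, n = m + 1 := ⟨n - 1, by omega⟩
  have hm1 : (0:ℝ) < (m:ℝ) + 1 := by positivity
  obtain ⟨b, hb_def⟩ : ∃ x : ℝ, x = 1 - 1/((m:ℝ)+1) := ⟨_, rfl⟩
  have hb0 : 0 ≤ b := by
    rw [hb_def]
    have : 1/((m:ℝ)+1) ≤ 1 := by
      rw [div_le_one hm1]; linarith [Nat.cast_nonneg (α := ℝ) m]
    linarith
  have hb1 : b < 1 := by
    rw [hb_def]
    have : 0 < 1/((m:ℝ)+1) := by positivity
    linarith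
  have hbm : ((m:ℝ)+1) * b = m := by rw [hb_def]; field_simp; ring
  obtain ⟨D, hD_def⟩ : ∃ x : ℝ, x = 1 - b^(m+1) := ⟨_, rfl⟩
  have hD0 : 0 < D := by
    have : b^(m+1) < 1 := pow_lt_one₀ hb0 hb1 (Nat.succ_ne_zero m)
    rw [hD_def]; linarith
  have hD1 : D ≤ 1 := by
    have : 0 ≤ b^(m+1) := pow_nonneg hb0 _
    rw [hD_def]; linarith
  have hbm0 : 0 < b^m := by
    rcases Nat.eq_zero_or_pos m with h | h
    · subst h; simp
    · apply pow_pos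
      rw [hb_def]
      have h1 : (1:ℝ) ≤ (m:ℝ) := by exact_mod_cast h
      have : 1/((m:ℝ)+1) < 1 := by rw [div_lt_one hm1]; linarith
      linarith
  obtain ⟨A, hA_def⟩ : ∃ x : ℝ, x = b^m / (((m:ℝ)+1) * D^2) := ⟨_, rfl⟩
  have hA0 : 0 < A := by rw [hA_def]; positivity
  -- b^m ≤ D
  have hbmD : b^m + b^(m+1) ≤ 1 := by
    rcases Nat.eq_zero_or_pos m with h | h
    · subst h; simp [hb_def]
    · have hbpos : 0 < b := by
        rw [hb_def]
        have h1 : (1:ℝ) ≤ (m:ℝ) := by exact_mod_cast h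
        have : 1/((m:ℝ)+1) < 1 := by rw [div_lt_one hm1]; linarith
        linarith
      have hm0 : (0:ℝ) < (m:ℝ) := by exact_mod_cast h
      -- (1/b)^m ≥ 2
      have hinv : (2:ℝ) ≤ (1/b)^m := by
        have hb' : 1/b = 1 + 1/((m:ℝ)) := by
          rw [hb_def]; field_simp; rw [add_sub_cancel_right, div_self (ne_of_gt hm0)]
        rw [hb']
        have h2m : (-2:ℝ) ≤ 1/(m:ℝ) := by
          have : (0:ℝ) ≤ 1/(m:ℝ) := by positivity
          linarith
        have hbp := one_add_mul_le_pow h2m m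
        have hmm : (m:ℝ) * (1/(m:ℝ)) = 1 := by field_simp
        rw [hmm] at hbp
        linarith
      have hbm2 : b^m ≤ 1/2 := by
        have hi : (1/b)^m * b^m = 1 := by
          rw [← mul_pow]; rw [one_div_mul_cancel (ne_of_gt hbpos)]; simp
        have h8 : 2 * b^m ≤ (1/b)^m * b^m :=
          mul_le_mul_of_nonneg_right hinv (pow_nonneg hb0 m)
        linarith
      have e9 : b^(m+1) = b^m * b := by rw [pow_succ]
      have h10 : b^m * b ≤ (1/2) * b := mul_le_mul_of_nonneg_right hbm2 hb0
      rw [e9]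
      linarith
  have hBnum : 0 ≤ D - b^m := by
    have : 0 ≤ b^(m+1) := pow_nonneg hb0 _
    rw [hD_def]; linarith
  obtain ⟨B, hB_def⟩ : ∃ x : ℝ, x = (D - b^m) / D^2 := ⟨_, rfl⟩
  have hB0 : 0 ≤ B := by rw [hB_def]; positivity
  have hABpos : 0 < A + B := by linarith
  have hkeyb : ((m:ℝ)+1) * b^(m+1) = (m:ℝ) * b^m := by
    rw [pow_succ]
    calc ((m:ℝ)+1) * (b^m * b) = (((m:ℝ)+1)*b) * b^m := by ring
      _ = (m:ℝ) * b^m := by rw [hbm]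
  -- A + B ≤ 1
  have hAB1 : A + B ≤ 1 := by
    rw [hA_def, hB_def]
    rw [div_add_div _ _ (by positivity) (by positivity), div_le_one (by positivity)]
    have h2 : ((m:ℝ)+1) * D * (1 - D) = D * ((m:ℝ)*b^m) := by
      have e : (1:ℝ) - D = b^(m+1) := by rw [hD_def]; ring
      rw [e]
      linear_combination D * hkeyb
    have h3 : D * ((m:ℝ)*b^m) ≤ (m:ℝ)*b^m := by
      have h30 : 0 ≤ (m:ℝ)*b^m := by positivity
      have := mul_le_mul_of_nonneg_right hD1 h30
      linarith
    have h4 : b^m + ((m:ℝ)+1)*(D-b^m) ≤ ((m:ℝ)+1)*D^2 := by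
      have h5 : ((m:ℝ)+1)*D - ((m:ℝ)+1)*D^2 = D*((m:ℝ)*b^m) := by
        linear_combination h2
      linarith
    have h6 := mul_le_mul_of_nonneg_right h4 (sq_nonneg D)
    linarith [h6]
  -- the distribution
  obtain ⟨G, hG_def⟩ : ∃ g : ℝ → ℝ, g = fun p => if p ≤ A + B then 0 else 1 - A/(p - B) := ⟨_, rfl⟩
  have hGval : ∀ p, A + B < p → G p = 1 - A/(p-B) := by
    intro p hp; rw [hG_def]; simp only [if_neg (not_le.mpr hp)]
  have hGpos : ∀ p, A + B < p → 0 < p - B := by intro p hp; linarith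
  have hG01 : ∀ p, 0 ≤ G p ∧ G p ≤ 1 := by
    intro p
    rw [hG_def]
    by_cases h : p ≤ A + B
    · simp [h]
    · push_neg at h
      simp only [if_neg (not_le.mpr h)]
      have hpB : 0 < p - B := by linarith
      constructor
      · have : A/(p-B) ≤ 1 := by rw [div_le_one hpB]; linarith
        linarith
      · have : 0 ≤ A/(p-B) := by positivity
        linarith
  have hGmono : Monotone G := by
    intro p q hpq
    rw [hG_def]
    by_cases hq : q ≤ A + B
    · simp only [if_pos (le_trans hpq hq), if_pos hq, le_refl]
    · push_neg at hq
      simp only [if_neg (not_le.mpr hq)]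
      have hqB : 0 < q - B := by linarith
      by_cases hp : p ≤ A + B
      · simp only [if_pos hp]
        have : A/(q-B) ≤ 1 := by rw [div_le_one hqB]; linarith
        linarith
      · push_neg at hp
        simp only [if_neg (not_le.mpr hp)]
        have hpB : 0 < p - B := by linarith
        have : A/(q-B) ≤ A/(p-B) :=
          div_le_div_of_nonneg_left (le_of_lt hA0) hpB (by linarith)
        linarith
  have hGleft : ∀ x : ℝ, Filter.Tendsto G (nhdsWithin x (Set.Iio x)) (nhds (G x)) := by
    intro x
    by_cases hx : x ≤ A + B
    · have hev : ∀ y ∈ Set.Iio x, G y = 0 := by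
        intro y hy
        rw [hG_def]
        simp only [if_pos (le_of_lt (lt_of_lt_of_le hy hx))]
      have hGx : G x = 0 := by rw [hG_def]; simp only [if_pos hx]
      rw [hGx]
      apply Filter.Tendsto.congr' _ tendsto_const_nhds
      filter_upwards [self_mem_nhdsWithin] with y hy
      exact (hev y hy).symm
    · push_neg at hx
      have hGx : G x = 1 - A/(x-B) := hGval x hx
      have hcont : ContinuousAt (fun p : ℝ => 1 - A/(p - B)) x := by
        apply ContinuousAt.sub continuousAt_const
        apply ContinuousAt.div continuousAt_const
        · exact ContinuousAt.sub continuousAt_id continuousAt_const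
        · have := hGpos x hx; exact ne_of_gt this
      have hmem : Set.Ioi (A+B) ∈ nhds x := Ioi_mem_nhds hx
      have htt : Filter.Tendsto (fun p : ℝ => 1 - A/(p - B))
          (nhdsWithin x (Set.Iio x)) (nhds (G x)) := by
        rw [hGx]
        exact (hcont.continuousWithinAt).tendsto
      apply Filter.Tendsto.congr' _ htt
      filter_upwards [nhdsWithin_le_nhds hmem] with y hy
      exact (hGval y hy).symm
  have hGzero : ∀ p : ℝ, p ≤ 0 → G p = 0 := by
    intro p hp
    rw [hG_def]
    simp only [if_pos (le_trans hp (le_of_lt hABpos))]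
  -- characterization of sublevel sets
  have hlevel : ∀ u : ℝ, 0 < u → u ≤ 1 →
      {p : ℝ | 0 ≤ p ∧ G p ≤ 1 - u} = Set.Icc 0 (B + A/u) := by
    intro u hu0 hu1
    have hAu : A ≤ A/u := by
      rw [le_div_iff₀ hu0]
      calc A * u ≤ A * 1 := by
            apply mul_le_mul_of_nonneg_left hu1 (le_of_lt hA0)
        _ = A := mul_one A
    ext p
    simp only [Set.mem_setOf_eq, Set.mem_Icc]
    constructor
    · rintro ⟨hp0, hp⟩
      refine ⟨hp0, ?_⟩
      by_contra hc
      push_neg at hc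
      have hpAB : A + B < p := by linarith
      rw [hGval p hpAB] at hp
      have hpB := hGpos p hpAB
      have h2 : u ≤ A/(p-B) := by linarith
      rw [le_div_iff₀ hpB] at h2
      have h3 : p - B ≤ A/u := by rw [le_div_iff₀ hu0]; linarith
      linarith
    · rintro ⟨hp0, hp⟩
      refine ⟨hp0, ?_⟩
      by_cases hpc : p ≤ A + B
      · rw [hG_def]; simp only [if_pos hpc]; linarith
      · push_neg at hpc
        rw [hGval p hpc]
        have hpB := hGpos p hpc
        have h1 : p - B ≤ A/u := by linarith
        have h2 : (p - B) * u ≤ A := by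
          rw [← le_div_iff₀ hu0]; linarith
        have h3 : u ≤ A/(p-B) := by rw [le_div_iff₀ hpB]; linarith
        linarith
  have hBAu0 : ∀ u : ℝ, 0 < u → 0 ≤ B + A/u := by
    intro u hu; positivity
  have hsSup : ∀ u : ℝ, 0 < u → u ≤ 1 →
      sSup {p : ℝ | 0 ≤ p ∧ G p ≤ 1 - u} = B + A/u := by
    intro u hu0 hu1
    rw [hlevel u hu0 hu1]
    exact csSup_Icc (hBAu0 u hu0)
  have hBdd : ∀ t : ℝ, 0 ≤ t → t < 1 → BddAbove {p : ℝ | 0 ≤ p ∧ G p ≤ t} := by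
    intro t ht0 ht1
    have h1t : 0 < 1 - t := by linarith
    have : {p : ℝ | 0 ≤ p ∧ G p ≤ t} = {p : ℝ | 0 ≤ p ∧ G p ≤ 1 - (1-t)} := by
      norm_num
    rw [this, hlevel (1-t) h1t (by linarith)]
    exact bddAbove_Icc
  have hConc : ConcaveOn ℝ (Set.Ioc (0 : ℝ) 1)
      (fun u : ℝ => u * sSup {p : ℝ | 0 ≤ p ∧ G p ≤ 1 - u}) := by
    refine ⟨convex_Ioc 0 1, ?_⟩
    intro x hx y hy a c ha hc hac
    have hz := (convex_Ioc (0:ℝ) 1) hx hy ha hc hac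
    simp only [smul_eq_mul]
    have hz' : a*x + c*y ∈ Set.Ioc (0:ℝ) 1 := by simpa using hz
    rw [hsSup x hx.1 hx.2, hsSup y hy.1 hy.2, hsSup (a*x+c*y) hz'.1 hz'.2]
    have hx0 : x ≠ 0 := ne_of_gt hx.1
    have hy0 : y ≠ 0 := ne_of_gt hy.1
    have hz0 : a*x + c*y ≠ 0 := ne_of_gt hz'.1
    have e1 : x * (B + A/x) = B*x + A := by field_simp
    have e2 : y * (B + A/y) = B*y + A := by field_simp
    have e3 : (a*x + c*y) * (B + A/(a*x + c*y)) = B*(a*x+c*y) + A := by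
      field_simp
    rw [e1, e2, e3]
    have : a*(B*x+A) + c*(B*y+A) = B*(a*x+c*y) + A := by
      linear_combination A * hac
    linarith
  -- geometric sum identities
  have h1b : (1 - b) * ((m:ℝ)+1) = 1 := by rw [hb_def]; field_simp; ring
  have hSb : (∑ k ∈ range (m+1), b^k) = ((m:ℝ)+1) * D := by
    have hg := geom_sum_mul b (m+1)
    have : (∑ k ∈ range (m+1), b^k) = (∑ k ∈ range (m+1), b^k) * ((1-b)*((m:ℝ)+1)) := by
      rw [h1b, mul_one]
    rw [this, hD_def]
    linear_combination (-((m:ℝ)+1)) * hg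
  have hSkb : (∑ k ∈ range (m+1), (k:ℝ)*b^k) = ((m:ℝ)+1)^2 * ((D - b^m) * b) := by
    have hJ := lem_J b (m+1)
    have e : (∑ k ∈ range (m+1), (k:ℝ)*b^k)
        = (∑ k ∈ range (m+1), (k:ℝ)*b^k) * (((1-b)*((m:ℝ)+1))^2) := by
      rw [h1b]; ring
    rw [e, hD_def]
    push_cast at hJ
    push_cast
    linear_combination (((m:ℝ)+1)^2) * hJ + (((m:ℝ)+1)^2 * b) * hkeyb
  have hDne : D ≠ 0 := ne_of_gt hD0
  have hsum1 : A * (∑ k ∈ range (m+1), b^k) + B * (1 - b^(m+1)) = 1 := by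
    rw [hSb, hA_def, hB_def]
    have e : (1:ℝ) - b^(m+1) = D := by rw [hD_def]
    rw [e, div_mul_eq_mul_div, div_mul_eq_mul_div,
      div_add_div _ _ (by positivity) (by positivity),
      div_eq_one_iff_eq (by positivity)]
    ring
  -- the key inequality
  have hkeyineq : ∀ x : ℝ, 0 ≤ x →
      A * (∑ k ∈ range (m+1), x^k) + B * (1 - x^(m+1)) ≤ 1 := by
    intro x hx0
    rcases Nat.eq_zero_or_pos m with hm | hm
    · subst hm
      have hA1 : A = 1 := by
        rw [hA_def, hD_def, hb_def]; norm_num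
      have hB1 : B = 0 := by
        rw [hB_def, hD_def, hb_def]; norm_num
      rw [hA1, hB1]
      have : (∑ k ∈ range (0+1), x^k) = 1 := by
        rw [zero_add, range_one, sum_singleton, pow_zero]
      rw [this]
      norm_num
    · have hbpos : 0 < b := by
        rw [hb_def]
        have h1 : (1:ℝ) ≤ (m:ℝ) := by exact_mod_cast hm
        have : 1/((m:ℝ)+1) < 1 := by rw [div_lt_one hm1]; linarith
        linarith
      have e1 : (∑ k ∈ range (m+1), x^k) - (∑ k ∈ range (m+1), b^k)
          = (x - b) * (∑ k ∈ range (m+1), ∑ i ∈ range k, x^i * b^(k-1-i)) := by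
        rw [← sum_sub_distrib, mul_comm (x - b), sum_mul]
        apply sum_congr rfl
        intro k _
        exact (geom_sum₂_mul x b k).symm
      have e2 : x^(m+1) - b^(m+1)
          = (x - b) * (∑ i ∈ range (m+1), x^i * b^(m+1-1-i)) := by
        rw [mul_comm (x - b)]
        exact (geom_sum₂_mul x b (m+1)).symm
      rcases le_total b x with hbx | hbx
      · -- x ≥ b
        have hch : ((m:ℝ)+1)*b^(m+1) * (∑ k ∈ range (m+1), ∑ i ∈ range k, x^i * b^(k-1-i))
            ≤ (∑ k ∈ range (m+1), (k:ℝ)*b^k) * (∑ i ∈ range (m+1), x^i * b^(m+1-1-i)) := by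
          rw [mul_sum, sum_mul]
          apply sum_le_sum
          intro k hk
          rw [mem_range] at hk
          have := lem_chain b x hb0 hbx k (m+1) (by omega)
          push_cast at this
          calc ((m:ℝ)+1)*b^(m+1) * (∑ i ∈ range k, x^i * b^(k-1-i))
              ≤ (k:ℝ)*b^k * (∑ i ∈ range (m+1), x^i * b^(m+1-1-i)) := this
            _ = (k:ℝ)*b^k * (∑ i ∈ range (m+1), x^i * b^(m+1-1-i)) := rfl
        rw [hSkb] at hch
        have hmain : b^m * (∑ k ∈ range (m+1), ∑ i ∈ range k, x^i * b^(k-1-i))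
            ≤ ((m:ℝ)+1) * ((D - b^m) * (∑ i ∈ range (m+1), x^i * b^(m+1-1-i))) := by
          have hc1 : (((m:ℝ)+1)*b) * (b^m * (∑ k ∈ range (m+1), ∑ i ∈ range k, x^i * b^(k-1-i)))
              ≤ (((m:ℝ)+1)*b) * (((m:ℝ)+1) * ((D - b^m) * (∑ i ∈ range (m+1), x^i * b^(m+1-1-i)))) := by
            calc (((m:ℝ)+1)*b) * (b^m * (∑ k ∈ range (m+1), ∑ i ∈ range k, x^i * b^(k-1-i)))
                = ((m:ℝ)+1)*b^(m+1) * (∑ k ∈ range (m+1), ∑ i ∈ range k, x^i * b^(k-1-i)) := by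
                  ring
              _ ≤ ((m:ℝ)+1)^2 * ((D - b^m) * b) * (∑ i ∈ range (m+1), x^i * b^(m+1-1-i)) := hch
              _ = (((m:ℝ)+1)*b) * (((m:ℝ)+1) * ((D - b^m) * (∑ i ∈ range (m+1), x^i * b^(m+1-1-i)))) := by
                  ring
          have hpos : 0 < ((m:ℝ)+1)*b := by positivity
          exact le_of_mul_le_mul_left hc1 hpos
        have hASB : A * (∑ k ∈ range (m+1), ∑ i ∈ range k, x^i * b^(k-1-i))
            ≤ B * (∑ i ∈ range (m+1), x^i * b^(m+1-1-i)) := by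
          rw [hA_def, hB_def]
          rw [div_mul_eq_mul_div, div_mul_eq_mul_div,
            div_le_div_iff₀ (by positivity) (by positivity)]
          have h5 := mul_le_mul_of_nonneg_right hmain (le_of_lt (pow_pos hD0 2))
          linarith [h5]
        have hxb' : 0 ≤ x - b := by linarith
        have hmulS := mul_le_mul_of_nonneg_left hASB hxb'
        have grand : A * (∑ k ∈ range (m+1), x^k) + B * (1 - x^(m+1))
            = 1 + (x-b) * (A * (∑ k ∈ range (m+1), ∑ i ∈ range k, x^i * b^(k-1-i)))
              - (x-b) * (B * (∑ i ∈ range (m+1), x^i * b^(m+1-1-i))) := by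
          linear_combination hsum1 + A * e1 - B * e2
        rw [grand]
        linarith
      · -- x ≤ b
        have hch : (∑ k ∈ range (m+1), (k:ℝ)*b^k) * (∑ i ∈ range (m+1), x^i * b^(m+1-1-i))
            ≤ ((m:ℝ)+1)*b^(m+1) * (∑ k ∈ range (m+1), ∑ i ∈ range k, x^i * b^(k-1-i)) := by
          calc (∑ k ∈ range (m+1), (k:ℝ)*b^k) * (∑ i ∈ range (m+1), x^i * b^(m+1-1-i))
              = ∑ k ∈ range (m+1), (k:ℝ)*b^k * (∑ i ∈ range (m+1), x^i * b^(m+1-1-i)) :=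
                sum_mul _ _ _
            _ ≤ ∑ k ∈ range (m+1), ((m:ℝ)+1)*b^(m+1) * (∑ i ∈ range k, x^i * b^(k-1-i)) := by
                apply sum_le_sum
                intro k hk
                rw [mem_range] at hk
                have := lem_chain' b x hx0 hbx k (m+1) (by omega)
                push_cast at this
                exact this
            _ = ((m:ℝ)+1)*b^(m+1) * (∑ k ∈ range (m+1), ∑ i ∈ range k, x^i * b^(k-1-i)) :=
                (mul_sum _ _ _).symm
        rw [hSkb] at hch
        have hmain : ((m:ℝ)+1) * ((D - b^m) * (∑ i ∈ range (m+1), x^i * b^(m+1-1-i)))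
            ≤ b^m * (∑ k ∈ range (m+1), ∑ i ∈ range k, x^i * b^(k-1-i)) := by
          have hc1 : (((m:ℝ)+1)*b) * (((m:ℝ)+1) * ((D - b^m) * (∑ i ∈ range (m+1), x^i * b^(m+1-1-i))))
              ≤ (((m:ℝ)+1)*b) * (b^m * (∑ k ∈ range (m+1), ∑ i ∈ range k, x^i * b^(k-1-i))) := by
            calc (((m:ℝ)+1)*b) * (((m:ℝ)+1) * ((D - b^m) * (∑ i ∈ range (m+1), x^i * b^(m+1-1-i))))
                = ((m:ℝ)+1)^2 * ((D - b^m) * b) * (∑ i ∈ range (m+1), x^i * b^(m+1-1-i)) := by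
                  ring
              _ ≤ ((m:ℝ)+1)*b^(m+1) * (∑ k ∈ range (m+1), ∑ i ∈ range k, x^i * b^(k-1-i)) := hch
              _ = (((m:ℝ)+1)*b) * (b^m * (∑ k ∈ range (m+1), ∑ i ∈ range k, x^i * b^(k-1-i))) := by
                  ring
          have hpos : 0 < ((m:ℝ)+1)*b := by positivity
          exact le_of_mul_le_mul_left hc1 hpos
        have hASB : B * (∑ i ∈ range (m+1), x^i * b^(m+1-1-i))
            ≤ A * (∑ k ∈ range (m+1), ∑ i ∈ range k, x^i * b^(k-1-i)) := by
          rw [hA_def, hB_def]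
          rw [div_mul_eq_mul_div, div_mul_eq_mul_div,
            div_le_div_iff₀ (by positivity) (by positivity)]
          have h5 := mul_le_mul_of_nonneg_right hmain (le_of_lt (pow_pos hD0 2))
          linarith [h5]
        have hxb' : x - b ≤ 0 := by linarith
        have hmulS := mul_le_mul_of_nonpos_left hASB hxb'
        have grand : A * (∑ k ∈ range (m+1), x^k) + B * (1 - x^(m+1))
            = 1 + (x-b) * (A * (∑ k ∈ range (m+1), ∑ i ∈ range k, x^i * b^(k-1-i)))
              - (x-b) * (B * (∑ i ∈ range (m+1), x^i * b^(m+1-1-i))) := by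
          linear_combination hsum1 + A * e1 - B * e2
        rw [grand]
        linarith
  have hnz : m + 1 ≠ 0 := Nat.succ_ne_zero m
  -- anonymous revenue bound
  have han : ∀ p : ℝ, 0 ≤ p → p * (1 - (G p)^(m+1)) ≤ 1 := by
    intro p hp
    by_cases hpc : p ≤ A + B
    · have hGp : G p = 0 := by rw [hG_def]; simp only [if_pos hpc]
      rw [hGp, zero_pow hnz]
      norm_num
      linarith
    · push_neg at hpc
      have hpB := hGpos p hpc
      have hxeq : G p = 1 - A/(p-B) := hGval p hpc
      have h1x : 1 - G p = A/(p-B) := by rw [hxeq]; ring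
      have hx0 : 0 ≤ G p := (hG01 p).1
      have e4 : (A/(p-B)) * (p-B) = A := div_mul_cancel₀ A (ne_of_gt hpB)
      have hp1x : p * (1 - G p) = B * (1 - G p) + A := by
        rw [h1x]; linear_combination e4
      have hgs : (1 - G p) * (∑ k ∈ range (m+1), (G p)^k) = 1 - (G p)^(m+1) := by
        linear_combination (-1:ℝ) * geom_sum_mul (G p) (m+1)
      have key := hkeyineq (G p) hx0
      calc p * (1 - (G p)^(m+1))
          = A * (∑ k ∈ range (m+1), (G p)^k) + B * (1 - (G p)^(m+1)) := by
            rw [← hgs]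
            linear_combination (∑ k ∈ range (m+1), (G p)^k) * hp1x
        _ ≤ 1 := key
  -- choice of epsilon and prices
  obtain ⟨ε, hε_def⟩ : ∃ e : ℝ, e = min (1/2) (δ*D/((m:ℝ)+1)) := ⟨_, rfl⟩
  have hε0 : 0 < ε := by
    rw [hε_def]
    apply lt_min
    · norm_num
    · positivity
  have hε1 : ε < 1 := by
    have : ε ≤ 1/2 := by rw [hε_def]; exact min_le_left _ _
    linarith
  have hεle : ε ≤ δ*D/((m:ℝ)+1) := by rw [hε_def]; exact min_le_right _ _
  obtain ⟨P, hP_def⟩ : ∃ q : ℝ, q = B + A/ε := ⟨_, rfl⟩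
  have hP0 : 0 ≤ P := by rw [hP_def]; positivity
  have hPgt : A + B < P := by
    rw [hP_def]
    have : A < A/ε := by
      rw [lt_div_iff₀ hε0]
      have := mul_lt_mul_of_pos_left hε1 hA0
      linarith
    linarith
  have hGP : G P = 1 - ε := by
    rw [hGval P hPgt, hP_def]
    have e : B + A/ε - B = A/ε := by ring
    rw [e]
    have e2 : A/(A/ε) = ε := by
      rw [div_div_eq_mul_div, mul_comm, mul_div_assoc, div_self (ne_of_gt hA0), mul_one]
    rw [e2]
  have hGAB : G (A+B) = 0 := by rw [hG_def]; simp only [if_pos le_rfl]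
  obtain ⟨pv, hpv_def⟩ : ∃ f : Fin (m+1) → ℝ,
      f = fun i : Fin (m+1) => if (i:ℕ) = m then A + B else P := ⟨_, rfl⟩
  have hpv0 : ∀ i, 0 ≤ pv i := by
    intro i
    rw [hpv_def]
    dsimp only
    split
    · linarith
    · exact hP0
  have hpvlast : pv (Fin.last m) = A + B := by
    rw [hpv_def]; simp
  have hpvcast : ∀ i : Fin m, pv i.castSucc = P := by
    intro i
    rw [hpv_def]
    dsimp only
    rw [if_neg]
    have := i.is_lt
    simp only [Fin.coe_castSucc]
    omega
  have hprod : ∀ i : Fin (m+1), (∏ j ∈ Finset.Iio i, G (pv j)) = (1-ε)^(i:ℕ) := by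
    intro i
    have hc : ∀ j ∈ Finset.Iio i, G (pv j) = 1 - ε := by
      intro j hj
      rw [Finset.mem_Iio] at hj
      have hji : (j:ℕ) < (i:ℕ) := hj
      have hile : (i:ℕ) ≤ m := Fin.is_le i
      have hpj : pv j = P := by
        rw [hpv_def]
        dsimp only
        rw [if_neg]
        omega
      rw [hpj, hGP]
    rw [prod_congr rfl hc, prod_const, Fin.card_Iio]
  have hsum : (∑ i, pv i * (1 - G (pv i)) * ∏ j ∈ Finset.Iio i, G (pv j))
      = (P * ε) * (∑ i ∈ range m, (1-ε)^i) + (A+B) * (1-ε)^m := by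
    rw [Fin.sum_univ_castSucc]
    congr 1
    · rw [← Fin.sum_univ_eq_sum_range (fun i => (1-ε)^i) m, mul_sum]
      apply sum_congr rfl
      intro i _
      rw [hpvcast i, hGP, hprod i.castSucc]
      simp only [Fin.coe_castSucc]
      ring
    · rw [hpvlast, hGAB, hprod (Fin.last m)]
      simp only [Fin.val_last]
      ring
  have hCval : ((m:ℝ)+1)*A + B = 1/D := by
    rw [hA_def, hB_def, mul_div_assoc']
    rw [div_add_div _ _ (by positivity) (by positivity),
      div_eq_div_iff (by positivity) (ne_of_gt hD0)]
    ring
  have hPε : P * ε = B*ε + A := by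
    rw [hP_def]
    have : A/ε*ε = A := div_mul_cancel₀ A (ne_of_gt hε0)
    linear_combination this
  have hSg0 : 0 ≤ ∑ i ∈ range m, (1-ε)^i := by
    apply sum_nonneg
    intro i _
    apply pow_nonneg
    linarith
  have hbern : ∀ i : ℕ, (i:ℝ) ≤ (m:ℝ) → 1 - (m:ℝ)*ε ≤ (1-ε)^i := by
    intro i him
    have h2 := one_add_mul_le_pow (a := -ε) (by linarith) i
    have : (1:ℝ) + (i:ℝ)*(-ε) = 1 - (i:ℝ)*ε := by ring
    rw [this] at h2
    have : (1:ℝ) - (m:ℝ)*ε ≤ 1 - (i:ℝ)*ε := by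
      have := mul_le_mul_of_nonneg_right him (le_of_lt hε0)
      linarith
    calc (1:ℝ) - (m:ℝ)*ε ≤ 1 - (i:ℝ)*ε := this
      _ ≤ (1+(-ε))^i := h2
      _ = (1-ε)^i := by ring_nf
  have hsum_ge : (m:ℝ)*(1 - (m:ℝ)*ε) ≤ ∑ i ∈ range m, (1-ε)^i := by
    calc (m:ℝ)*(1 - (m:ℝ)*ε) = ∑ _i ∈ range m, (1 - (m:ℝ)*ε) := by
          rw [sum_const, card_range, nsmul_eq_mul]
      _ ≤ ∑ i ∈ range m, (1-ε)^i := by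
          apply sum_le_sum
          intro i hi
          rw [mem_range] at hi
          apply hbern
          exact_mod_cast le_of_lt hi
  have hpow_ge : 1 - (m:ℝ)*ε ≤ (1-ε)^m := hbern m le_rfl
  have hRd_ge : 1/D - δ ≤ (P * ε) * (∑ i ∈ range m, (1-ε)^i) + (A+B) * (1-ε)^m := by
    have s1 : A*((m:ℝ)*(1 - (m:ℝ)*ε)) ≤ A*(∑ i ∈ range m, (1-ε)^i) :=
      mul_le_mul_of_nonneg_left hsum_ge (le_of_lt hA0)
    have s2 : A*(∑ i ∈ range m, (1-ε)^i) ≤ (P*ε)*(∑ i ∈ range m, (1-ε)^i) := by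
      apply mul_le_mul_of_nonneg_right _ hSg0
      rw [hPε]
      have : 0 ≤ B*ε := mul_nonneg hB0 (le_of_lt hε0)
      linarith
    have s3 : (A+B)*(1 - (m:ℝ)*ε) ≤ (A+B)*(1-ε)^m :=
      mul_le_mul_of_nonneg_left hpow_ge (le_of_lt hABpos)
    have s4 : (m:ℝ)*ε ≤ δ*D := by
      have h6 : ((m:ℝ)+1)*ε ≤ ((m:ℝ)+1)*(δ*D/((m:ℝ)+1)) :=
        mul_le_mul_of_nonneg_left hεle (by positivity)
      have h7 : ((m:ℝ)+1)*(δ*D/((m:ℝ)+1)) = δ*D := by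
        field_simp
      have h8 : (m:ℝ)*ε + ε = ((m:ℝ)+1)*ε := by ring
      linarith [le_of_lt hε0]
    have e5 : A*((m:ℝ)*(1 - (m:ℝ)*ε)) + (A+B)*(1 - (m:ℝ)*ε) = (1/D)*(1-(m:ℝ)*ε) := by
      rw [← hCval]; ring
    have s5 : (1/D)*((m:ℝ)*ε) ≤ (1/D)*(δ*D) :=
      mul_le_mul_of_nonneg_left s4 (by positivity)
    have e6 : (1/D)*(δ*D) = δ := by field_simp
    rw [e6] at s5
    have e7 : (1/D)*(1-(m:ℝ)*ε) = 1/D - (1/D)*((m:ℝ)*ε) := by ring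
    linarith [s1, s2, s3, s5]
  -- conclusion
  refine ⟨G, pv, hGmono, hGleft, (fun p => (hG01 p).1), (fun p => (hG01 p).2), hGzero,
    hBdd, hConc, hpv0, ?_⟩
  intro p hp
  have hcast : (((m+1 : ℕ)):ℝ) = (m:ℝ)+1 := by push_cast; ring
  have hDg : (1:ℝ) - (1 - 1/(((m+1 : ℕ)):ℝ))^(m+1) = D := by
    rw [hcast, ← hb_def]
    exact hD_def.symm
  rw [hDg]
  have hX0 : 0 ≤ p * (1 - (G p)^(m+1)) := by
    apply mul_nonneg hp
    have : (G p)^(m+1) ≤ 1 := pow_le_one₀ (hG01 p).1 (hG01 p).2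
    linarith
  have hRd0 : 0 ≤ ∑ i, pv i * (1 - G (pv i)) * ∏ j ∈ Finset.Iio i, G (pv j) := by
    apply sum_nonneg
    intro i _
    apply mul_nonneg
    · apply mul_nonneg (hpv0 i)
      have := (hG01 (pv i)).2
      linarith
    · exact prod_nonneg (fun j _ => (hG01 (pv j)).1)
  rcases le_or_gt (1/D - δ) 0 with hc | hc
  · calc (1/D - δ) * (p * (1 - (G p)^(m+1))) ≤ 0 := mul_nonpos_of_nonpos_of_nonneg hc hX0
      _ ≤ _ := hRd0
  · calc (1/D - δ) * (p * (1 - (G p)^(m+1)))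
        ≤ (1/D - δ) * 1 := mul_le_mul_of_nonneg_left (han p hp) (le_of_lt hc)
      _ = 1/D - δ := mul_one _
      _ ≤ _ := by rw [hsum]; exact hRd_ge
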